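/- arXiv:1905.12091 — 6 statements merged into one kernel-verified Lean document; each statement's English description precedes it below -/
import Mathlib

section
/- Let u, s_1, s_2, …, s_k be unit vectors in ℝ^d, let α_1,…,α_k ∈ ℝ with Σ_i α_i² > 0, and let z ∈ ℝ^d satisfy u = Σ_i α_i s_i + z. Let T be a linear subspace of ℝ^d, let Π_T denote orthogonal projection onto T, and set θ = ‖u − Π_T u‖. Then Σ_{i=1}^k ⟨u − Π_T u, s_i⟩² ≥ (θ² − ‖z‖²)₊² / (4 Σ_i α_i²), where (β)₊ denotes max(0, β). -/
/-- Increment lemma: if the unit vector `u = Σ αᵢ sᵢ + z` with unit vectors `sᵢ`,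
and `θ = ‖u − Π_T u‖`, then `Σ ⟨u − Π_T u, sᵢ⟩² ≥ (θ² − ‖z‖²)₊² / (4 Σ αᵢ²)`. -/
theorem stmt_5 (d k : ℕ) (u : EuclideanSpace ℝ (Fin d)) (hu : ‖u‖ = 1)
    (s : Fin k → EuclideanSpace ℝ (Fin d)) (hs : ∀ i, ‖s i‖ = 1)
    (α : Fin k → ℝ) (hα : 0 < ∑ i, (α i) ^ 2)
    (z : EuclideanSpace ℝ (Fin d)) (hdecomp : u = (∑ i, α i • s i) + z)
    (T : Submodule ℝ (EuclideanSpace ℝ (Fin d))) (θ : ℝ)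
    (hθ : θ = ‖u - (Submodule.orthogonalProjectionOnto T u : EuclideanSpace ℝ (Fin d))‖) :
    ∑ i, (inner ℝ (u - (Submodule.orthogonalProjectionOnto T u : EuclideanSpace ℝ (Fin d))) (s i) : ℝ) ^ 2
      ≥ (max 0 (θ ^ 2 - ‖z‖ ^ 2)) ^ 2 / (4 * ∑ i, (α i) ^ 2) := by
  set w : EuclideanSpace ℝ (Fin d) := u - (Submodule.orthogonalProjectionOnto T u : EuclideanSpace ℝ (Fin d))
    with hw
  have hwnorm : ‖w‖ = θ := hθ.symm
  -- ⟪w, u⟫ = θ^2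
  have horth : (inner ℝ w ((Submodule.orthogonalProjectionOnto T u : EuclideanSpace ℝ (Fin d))) : ℝ) = 0 := by
    have h1 : w ∈ Tᗮ := T.sub_starProjection_mem_orthogonal u
    have := h1 ((Submodule.orthogonalProjectionOnto T u : EuclideanSpace ℝ (Fin d)))
      (Submodule.orthogonalProjectionOnto T u).2
    rwa [real_inner_comm] at this
  have hwu : (inner ℝ w u : ℝ) = θ ^ 2 := by
    have : (inner ℝ w u : ℝ) = inner ℝ w (w + (Submodule.orthogonalProjectionOnto T u : EuclideanSpace ℝ (Fin d))) := by
      congr 1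
      simp [hw]
    rw [this, inner_add_right, horth, real_inner_self_eq_norm_sq, hwnorm]
    ring
  -- decomposition
  have hdec : (inner ℝ w u : ℝ) = (∑ i, α i * inner ℝ w (s i)) + inner ℝ w z := by
    conv_lhs => rw [hdecomp]
    rw [inner_add_right, inner_sum]
    simp_rw [real_inner_smul_right]
  have hwz : (inner ℝ w z : ℝ) ≤ θ * ‖z‖ := by
    calc (inner ℝ w z : ℝ) ≤ ‖w‖ * ‖z‖ := real_inner_le_norm w z
    _ = θ * ‖z‖ := by rw [hwnorm]
  have hA : (∑ i, α i * inner ℝ w (s i)) ≥ θ ^ 2 - θ * ‖z‖ := by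
    have := hdec
    rw [hwu] at this
    linarith
  -- Cauchy-Schwarz
  have hCS : (∑ i, α i * (inner ℝ w (s i) : ℝ)) ^ 2
      ≤ (∑ i, (α i) ^ 2) * ∑ i, ((inner ℝ w (s i) : ℝ)) ^ 2 :=
    Finset.sum_mul_sq_le_sq_mul_sq Finset.univ α _
  have hθ0 : 0 ≤ θ := hθ ▸ norm_nonneg _
  have hz0 : 0 ≤ ‖z‖ := norm_nonneg _
  by_cases hcase : θ ^ 2 - ‖z‖ ^ 2 ≤ 0
  · rw [max_eq_left hcase]
    have : (0:ℝ) ^ 2 / (4 * ∑ i, (α i) ^ 2) = 0 := by simp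
    rw [this]
    positivity
  · push_neg at hcase
    rw [max_eq_right hcase.le]
    rw [ge_iff_le, div_le_iff₀ (by positivity)]
    have h2A : θ ^ 2 - ‖z‖ ^ 2 ≤ 2 * (∑ i, α i * (inner ℝ w (s i) : ℝ)) := by
      nlinarith [sq_nonneg (θ - ‖z‖)]
    have hApos : 0 ≤ (∑ i, α i * (inner ℝ w (s i) : ℝ)) := by nlinarith
    nlinarith [sq_nonneg (θ ^ 2 - ‖z‖ ^ 2)]
end

section
/- Let d, n, m, k be positive integers, and let Λ > 0, ε > 0. Let x_1,…,x_n ∈ ℝ^d be nonzero vectors, let a_1,…,a_m ∈ ℝ^d be unit vectors, and let y_1,…,y_n ∈ ℝ^m each have at most k nonzero entries and satisfy ‖y_i‖² ≤ Λ‖x_i‖². For each i let T_i be a linear subspace of ℝ^d and set z_i = x_i − Π_{T_i} x_i. Define W = Σ_i ‖x_i‖², γ_i = ‖x_i − Σ_j y_i(j) a_j‖² / ‖x_i‖², γ* = (1/W) Σ_i ‖x_i‖² γ_i, and ψ = (1/W) Σ_i ‖z_i‖². If ψ ≥ γ* + ε, then there exist an index ℓ ∈ {1,…,m} and a subset R ⊆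 {1,…,n} such that ⟨z_i, a_ℓ⟩² ≥ (ε²/(16kΛ)) ‖x_i‖² for all i ∈ R, and Σ_{i∈R} ⟨z_i, a_ℓ⟩² ≥ ((ψ − γ*)²/(16mΛ)) · W. -/
set_option maxHeartbeats 1000000

/-- Existence of a good column of the optimal dictionary: if the current fractional
error ψ exceeds γ* + ε, then some dictionary column `a ℓ` has large thresholded
correlation with the residuals. -/
theorem stmt_9 (d n m k : ℕ) (hd : 0 < d) (hn : 0 < n) (hm : 0 < m) (hk : 0 < k)
    (Λ ε : ℝ) (hΛ : 0 < Λ) (hε : 0 < ε)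
    (x : Fin n → EuclideanSpace ℝ (Fin d)) (hx : ∀ i, x i ≠ 0)
    (a : Fin m → EuclideanSpace ℝ (Fin d)) (ha : ∀ j, ‖a j‖ = 1)
    (y : Fin n → Fin m → ℝ)
    (hysparse : ∀ i, {j | y i j ≠ 0}.ncard ≤ k)
    (hynorm : ∀ i, ∑ j, (y i j) ^ 2 ≤ Λ * ‖x i‖ ^ 2)
    (T : Fin n → Submodule ℝ (EuclideanSpace ℝ (Fin d)))
    (z : Fin n → EuclideanSpace ℝ (Fin d))
    (hz : ∀ i, z i = x i - (Submodule.orthogonalProjection (T i) (x i) : EuclideanSpace ℝ (Fin d)))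
    (W : ℝ) (hW : W = ∑ i, ‖x i‖ ^ 2)
    (γ : Fin n → ℝ) (hγ : ∀ i, γ i = ‖x i - ∑ j, y i j • a j‖ ^ 2 / ‖x i‖ ^ 2)
    (γs : ℝ) (hγs : γs = (1 / W) * ∑ i, ‖x i‖ ^ 2 * γ i)
    (ψ : ℝ) (hψ : ψ = (1 / W) * ∑ i, ‖z i‖ ^ 2)
    (hlarge : ψ ≥ γs + ε) :
    ∃ (ℓ : Fin m) (R : Finset (Fin n)),
      (∀ i ∈ R, (inner ℝ (z i) (a ℓ) : ℝ) ^ 2 ≥ (ε ^ 2 / (16 * k * Λ)) * ‖x i‖ ^ 2) ∧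
      ∑ i ∈ R, (inner ℝ (z i) (a ℓ) : ℝ) ^ 2 ≥ ((ψ - γs) ^ 2 / (16 * m * Λ)) * W := by
  classical
  set b : Fin n → EuclideanSpace ℝ (Fin d) := fun i => ∑ j, y i j • a j with hb
  set c : Fin n → Fin m → ℝ := fun i j => (inner ℝ (z i) (a j) : ℝ) with hc
  set δ : ℝ := ψ - γs with hδ
  set τ : ℝ := ε ^ 2 / (16 * (k : ℝ) * Λ) with hτ
  have hk' : (0:ℝ) < (k:ℝ) := by exact_mod_cast hk
  have hm' : (0:ℝ) < (m:ℝ) := by exact_mod_cast hm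
  have hεδ : ε ≤ δ := by simp only [hδ]; linarith
  have hxpos : ∀ i, (0:ℝ) < ‖x i‖ ^ 2 := fun i =>
    pow_pos (norm_pos_iff.mpr (hx i)) 2
  have hW0 : 0 < W := by
    rw [hW]
    exact Finset.sum_pos (fun i _ => hxpos i) ⟨⟨0, hn⟩, Finset.mem_univ _⟩
  have hγ0 : ∀ i, 0 ≤ γ i := fun i => by
    rw [hγ]; positivity
  have hγs0 : 0 ≤ γs := by
    rw [hγs]
    exact mul_nonneg (by positivity)
      (Finset.sum_nonneg fun i _ => mul_nonneg (sq_nonneg _) (hγ0 i))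
  have hψpos : 0 < ψ := lt_of_lt_of_le (by linarith) hlarge
  -- ⟨z i, x i⟩ = ‖z i‖²
  have hzx : ∀ i, (inner ℝ (z i) (x i) : ℝ) = ‖z i‖ ^ 2 := by
    intro i
    have hxe : x i = z i + (Submodule.orthogonalProjection (T i) (x i) : EuclideanSpace ℝ (Fin d)) := by
      rw [hz i]; abel
    have hmem : z i ∈ (T i)ᗮ := by
      rw [hz i]; exact (T i).sub_starProjection_mem_orthogonal (x i)
    have h0 : (inner ℝ ((Submodule.orthogonalProjection (T i) (x i) : EuclideanSpace ℝ (Fin d))) (z i) : ℝ) = 0 :=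
      Submodule.inner_right_of_mem_orthogonal (SetLike.coe_mem _) hmem
    rw [hxe, inner_add_right, real_inner_self_eq_norm_sq, real_inner_comm, h0, add_zero]
  -- sum identities
  have hψW : ∑ i, ‖z i‖ ^ 2 = ψ * W := by
    rw [hψ]; field_simp
  have hγW : ∑ i, ‖x i - b i‖ ^ 2 = γs * W := by
    have h1 : ∀ i, ‖x i - b i‖ ^ 2 = ‖x i‖ ^ 2 * γ i := fun i => by
      rw [hγ i, mul_div_cancel₀ _ (hxpos i).ne']
    rw [Finset.sum_congr rfl fun i _ => h1 i, hγs]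
    field_simp
  -- S := ∑ ⟨z i, b i⟩ ≥ (δ/2) W
  set S : ℝ := ∑ i, (inner ℝ (z i) (b i) : ℝ) with hS
  have hsplit : ψ * W = (∑ i, (inner ℝ (z i) (x i - b i) : ℝ)) + S := by
    rw [← hψW, hS, ← Finset.sum_add_distrib]
    refine Finset.sum_congr rfl fun i _ => ?_
    rw [inner_sub_right, ← hzx i]; ring
  have hCS1 : (∑ i, (inner ℝ (z i) (x i - b i) : ℝ)) ≤ ∑ i, ‖z i‖ * ‖x i - b i‖ :=
    Finset.sum_le_sum fun i _ => real_inner_le_norm _ _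
  have hCS2 : (∑ i, ‖z i‖ * ‖x i - b i‖) ^ 2 ≤ (ψ * W) * (γs * W) := by
    have := Finset.sum_mul_sq_le_sq_mul_sq Finset.univ (fun i => ‖z i‖)
      (fun i => ‖x i - b i‖)
    rw [hψW, hγW] at this
    exact this
  have hsumnn : 0 ≤ ∑ i, ‖z i‖ * ‖x i - b i‖ :=
    Finset.sum_nonneg fun i _ => mul_nonneg (norm_nonneg _) (norm_nonneg _)
  have hAM : (∑ i, ‖z i‖ * ‖x i - b i‖) ≤ (ψ + γs) / 2 * W := by
    have hRHS : ψ * W * (γs * W) ≤ ((ψ + γs) / 2 * W) ^ 2 := by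
      nlinarith [sq_nonneg ((ψ - γs) * W)]
    have hRnn : (0:ℝ) ≤ (ψ + γs) / 2 * W :=
      mul_nonneg (by linarith) hW0.le
    exact le_of_pow_le_pow_left₀ two_ne_zero hRnn (hCS2.trans hRHS)
  have hSlb : δ / 2 * W ≤ S := by
    have := hCS1.trans hAM
    simp only [hδ]; linarith
  -- expand S as double sum
  have hSexp : S = ∑ i, ∑ j, y i j * c i j := by
    refine Finset.sum_congr rfl fun i _ => ?_
    simp only [hb, hc, inner_sum, real_inner_smul_right]
  -- threshold setup
  set σ : ℝ := Real.sqrt ((k : ℝ) * Λ) with hσdef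
  have hσpos : 0 < σ := Real.sqrt_pos.mpr (by positivity)
  have hσ2 : σ ^ 2 = (k : ℝ) * Λ := Real.sq_sqrt (by positivity)
  set ρ : ℝ := ε / (4 * σ) with hρdef
  have hρpos : 0 < ρ := by positivity
  have hρ2 : ρ ^ 2 = τ := by
    rw [hρdef, hτ, div_pow, mul_pow, hσ2]
    norm_num [mul_assoc]
  have hτρ : ∀ i : Fin n, τ * ‖x i‖ ^ 2 = (ρ * ‖x i‖) ^ 2 := by
    intro i
    rw [← hρ2]; ring
  -- support finsets
  set supp : Fin n → Finset (Fin m) := fun i => Finset.univ.filter (fun j => y i j ≠ 0)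
    with hsupp
  have hsuppcard : ∀ i, (supp i).card ≤ k := by
    intro i
    have : {j | y i j ≠ 0} = ((supp i : Finset (Fin m)) : Set (Fin m)) := by
      ext j; simp [hsupp]
    have h2 := hysparse i
    rwa [this, Set.ncard_coe_finset] at h2
  -- ℓ¹ bound on y over support
  have hyl1 : ∀ i, (∑ j ∈ supp i, |y i j|) ≤ σ * ‖x i‖ := by
    intro i
    have hsq : (∑ j ∈ supp i, |y i j|) ^ 2 ≤ (σ * ‖x i‖) ^ 2 := by
      have hcs := Finset.sum_mul_sq_le_sq_mul_sq (supp i) (fun _ => (1:ℝ))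
        (fun j => |y i j|)
      simp only [one_mul, mul_one, one_pow, sq_abs, Finset.sum_const, nsmul_eq_mul] at hcs
      have h1 : ∑ j ∈ supp i, (y i j) ^ 2 ≤ ∑ j, (y i j) ^ 2 :=
        Finset.sum_le_sum_of_subset_of_nonneg (Finset.subset_univ _)
          (fun _ _ _ => sq_nonneg _)
      have h2 : ((supp i).card : ℝ) ≤ (k : ℝ) := by exact_mod_cast hsuppcard i
      calc (∑ j ∈ supp i, |y i j|) ^ 2
          ≤ ((supp i).card : ℝ) * ∑ j ∈ supp i, (y i j) ^ 2 := hcs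
        _ ≤ (k : ℝ) * (Λ * ‖x i‖ ^ 2) := by
            apply mul_le_mul h2 (h1.trans (hynorm i))
              (Finset.sum_nonneg fun _ _ => sq_nonneg _) hk'.le
        _ = (σ * ‖x i‖) ^ 2 := by rw [mul_pow, hσ2]; ring
    exact le_of_pow_le_pow_left₀ two_ne_zero (by positivity)
      (by simpa using hsq)
  -- small terms bound
  have hsmall : ∀ i, (∑ j ∈ Finset.univ.filter (fun j => ¬ τ * ‖x i‖ ^ 2 ≤ (c i j) ^ 2),
      y i j * c i j) ≤ ε / 4 * ‖x i‖ ^ 2 := by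
    intro i
    set t : Finset (Fin m) := Finset.univ.filter (fun j => ¬ τ * ‖x i‖ ^ 2 ≤ (c i j) ^ 2)
      with ht
    have hterm : ∀ j ∈ t, y i j * c i j ≤ |y i j| * (ρ * ‖x i‖) := by
      intro j hj
      have hjs : (c i j) ^ 2 < τ * ‖x i‖ ^ 2 := by
        simp only [ht, Finset.mem_filter] at hj
        exact lt_of_not_ge hj.2
      have habs : |c i j| ≤ ρ * ‖x i‖ := by
        apply le_of_pow_le_pow_left₀ two_ne_zero (by positivity)
        rw [sq_abs]
        calc (c i j) ^ 2 ≤ τ * ‖x i‖ ^ 2 := hjs.le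
          _ = (ρ * ‖x i‖) ^ 2 := hτρ i
      calc y i j * c i j ≤ |y i j * c i j| := le_abs_self _
        _ = |y i j| * |c i j| := abs_mul _ _
        _ ≤ |y i j| * (ρ * ‖x i‖) := by
            exact mul_le_mul_of_nonneg_left habs (abs_nonneg _)
    calc (∑ j ∈ t, y i j * c i j) ≤ ∑ j ∈ t, |y i j| * (ρ * ‖x i‖) :=
          Finset.sum_le_sum hterm
      _ = ∑ j ∈ t.filter (fun j => y i j ≠ 0), |y i j| * (ρ * ‖x i‖) := by
          symm
          apply Finset.sum_filter_of_ne
          intro j _ hne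
          intro h0
          simp [h0] at hne
      _ ≤ ∑ j ∈ supp i, |y i j| * (ρ * ‖x i‖) := by
          apply Finset.sum_le_sum_of_subset_of_nonneg
          · intro j hj
            simp only [Finset.mem_filter] at hj
            simp [hsupp, hj.2]
          · intro j _ _
            positivity
      _ = (∑ j ∈ supp i, |y i j|) * (ρ * ‖x i‖) := by rw [← Finset.sum_mul]
      _ ≤ (σ * ‖x i‖) * (ρ * ‖x i‖) := by
          apply mul_le_mul_of_nonneg_right (hyl1 i) (by positivity)
      _ = (σ * ρ) * ‖x i‖ ^ 2 := by ring
      _ = ε / 4 * ‖x i‖ ^ 2 := by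
          congr 1
          rw [hρdef]
          field_simp
  -- big part
  set Sbig : ℝ := ∑ i, ∑ j ∈ Finset.univ.filter (fun j => τ * ‖x i‖ ^ 2 ≤ (c i j) ^ 2),
    y i j * c i j with hSbig
  have hSbiglb : δ / 4 * W ≤ Sbig := by
    have hsplit2 : S = Sbig + ∑ i, ∑ j ∈ Finset.univ.filter
        (fun j => ¬ τ * ‖x i‖ ^ 2 ≤ (c i j) ^ 2), y i j * c i j := by
      rw [hSexp, hSbig, ← Finset.sum_add_distrib]
      refine Finset.sum_congr rfl fun i _ => ?_
      exact (Finset.sum_filter_add_sum_filter_not _ _ _).symm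
    have hsmallsum : (∑ i, ∑ j ∈ Finset.univ.filter
        (fun j => ¬ τ * ‖x i‖ ^ 2 ≤ (c i j) ^ 2), y i j * c i j) ≤ ε / 4 * W := by
      rw [hW, Finset.mul_sum]
      exact Finset.sum_le_sum fun i _ => hsmall i
    have h1 : ε / 4 * W ≤ δ / 4 * W := by
      apply mul_le_mul_of_nonneg_right (by linarith) hW0.le
    linarith
  -- Cauchy-Schwarz over pairs
  set sP : Finset (Fin n × Fin m) :=
    Finset.univ.filter (fun p => τ * ‖x p.1‖ ^ 2 ≤ (c p.1 p.2) ^ 2) with hsP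
  have hSbigpair : Sbig = ∑ p ∈ sP, y p.1 p.2 * c p.1 p.2 := by
    rw [hSbig, hsP, Finset.sum_filter, Fintype.sum_prod_type]
    refine Finset.sum_congr rfl fun i _ => ?_
    rw [Finset.sum_filter]
  set C : ℝ := ∑ p ∈ sP, (c p.1 p.2) ^ 2 with hC
  clear_value b c δ τ σ ρ supp S Sbig sP C
  have hy2 : (∑ p ∈ sP, (y p.1 p.2) ^ 2) ≤ Λ * W := by
    calc (∑ p ∈ sP, (y p.1 p.2) ^ 2) ≤ ∑ p : Fin n × Fin m, (y p.1 p.2) ^ 2 :=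
          Finset.sum_le_sum_of_subset_of_nonneg (Finset.subset_univ _)
            (fun _ _ _ => sq_nonneg _)
      _ = ∑ i, ∑ j, (y i j) ^ 2 := by rw [Fintype.sum_prod_type]
      _ ≤ ∑ i, Λ * ‖x i‖ ^ 2 := Finset.sum_le_sum fun i _ => hynorm i
      _ = Λ * W := by rw [hW, Finset.mul_sum]
  have hClb : δ ^ 2 * W / (16 * Λ) ≤ C := by
    have hcs := Finset.sum_mul_sq_le_sq_mul_sq sP (fun p => y p.1 p.2)
      (fun p => c p.1 p.2)
    have hSbig2 : Sbig ^ 2 ≤ (Λ * W) * C := by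
      rw [hSbigpair]
      calc (∑ p ∈ sP, y p.1 p.2 * c p.1 p.2) ^ 2
          ≤ (∑ p ∈ sP, (y p.1 p.2) ^ 2) * ∑ p ∈ sP, (c p.1 p.2) ^ 2 := hcs
        _ ≤ (Λ * W) * C := by
            rw [hC]
            exact mul_le_mul_of_nonneg_right hy2
              (Finset.sum_nonneg fun _ _ => sq_nonneg _)
    have hδpos : 0 < δ := lt_of_lt_of_le hε hεδ
    have h4 : 0 < δ / 4 * W := by positivity
    have h5 : (δ / 4 * W) ^ 2 ≤ Sbig ^ 2 :=
      pow_le_pow_left₀ h4.le hSbiglb 2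
    have key : (δ / 4 * W) ^ 2 ≤ Λ * W * C := h5.trans hSbig2
    have h16 : (0:ℝ) < 16 * Λ := by positivity
    rw [div_le_iff₀ h16, ← mul_le_mul_iff_of_pos_right hW0]
    calc δ ^ 2 * W * W = 16 * ((δ / 4 * W) ^ 2) := by ring
      _ ≤ 16 * (Λ * W * C) := by linarith [key]
      _ = C * (16 * Λ) * W := by ring
  -- column decomposition
  have hCcols : C = ∑ j, ∑ i ∈ Finset.univ.filter
      (fun i => τ * ‖x i‖ ^ 2 ≤ (c i j) ^ 2), (c i j) ^ 2 := by
    rw [hC, hsP, Finset.sum_filter, Fintype.sum_prod_type, Finset.sum_comm]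
    refine Finset.sum_congr rfl fun j _ => ?_
    rw [Finset.sum_filter]
  -- pigeonhole
  have hpig : ∃ ℓ : Fin m, C / m ≤ ∑ i ∈ Finset.univ.filter
      (fun i => τ * ‖x i‖ ^ 2 ≤ (c i ℓ) ^ 2), (c i ℓ) ^ 2 := by
    have hne : (Finset.univ : Finset (Fin m)).Nonempty := ⟨⟨0, hm⟩, Finset.mem_univ _⟩
    have hsum : ∑ _j : Fin m, C / m ≤ ∑ j, ∑ i ∈ Finset.univ.filter
        (fun i => τ * ‖x i‖ ^ 2 ≤ (c i j) ^ 2), (c i j) ^ 2 := by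
      rw [← hCcols, Finset.sum_const, Finset.card_univ, Fintype.card_fin,
        nsmul_eq_mul, mul_comm, div_mul_cancel₀ C hm'.ne']
    obtain ⟨ℓ, -, hℓ⟩ := Finset.exists_le_of_sum_le hne hsum
    exact ⟨ℓ, hℓ⟩
  obtain ⟨ℓ, hℓ⟩ := hpig
  refine ⟨ℓ, Finset.univ.filter (fun i => τ * ‖x i‖ ^ 2 ≤ (c i ℓ) ^ 2), ?_, ?_⟩
  · intro i hi
    simp only [Finset.mem_filter] at hi
    have h2 := hi.2
    simp only [hc] at h2
    exact h2
  · have h1 : δ ^ 2 * W / (16 * Λ) / m ≤ C / m :=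
      div_le_div_of_nonneg_right hClb hm'.le
    have heq : δ ^ 2 / (16 * (m:ℝ) * Λ) * W = δ ^ 2 * W / (16 * Λ) / m := by
      rw [div_mul_eq_mul_div, div_div]
      congr 1
      ring
    simp only [hc] at hℓ ⊢
    rw [ge_iff_le, heq]
    exact (h1.trans hℓ)
end

section
/- Let d, n, m, k be positive integers, and let Λ > 0, ε > 0, α, β ∈ (0,1]. Let x_1,…,x_n ∈ ℝ^d be nonzero vectors, let a_1,…,a_m ∈ ℝ^d be unit vectors, and let y_1,…,y_n ∈ ℝ^m each have at most k nonzero entries and satisfy ‖y_i‖² ≤ Λ‖x_i‖². For each i let T_i be a linear subspace of ℝ^d and set z_i = x_i − Π_{T_i} x_i. Define W = Σ_i ‖x_i‖², γ* = (1/W) Σ_i ‖x_i − Σ_j y_i(j) a_j‖², ψ = (1/W) Σ_i ‖z_i‖², and τ = ε²/(16kΛ). Suppose ψ ≥ γ* + ε, and suppose v ∈ ℝ^d is a unit vector satisfying the (α,β)-approximation guarantee for the τ-TC instance with vectors z_i/‖x_i‖ and weights ‖x_i‖², i.e., Σ_{i : ⟨z_i,v⟩² ≥ ατ‖x_i‖²}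 ⟨z_i,v⟩² ≥ β · sup_{‖u‖=1} Σ_{i : ⟨z_i,u⟩² ≥ τ‖x_i‖²} ⟨z_i,u⟩². Then Σ_{i : ⟨z_i,v⟩² ≥ ατ‖x_i‖²} ⟨z_i,v⟩² ≥ (β (ψ − γ*)² / (16mΛ)) · W. -/
set_option maxHeartbeats 1000000 in
/-- Guarantee for the vector returned by an (α,β)-approximation to the residual
τ-TC instance: its thresholded correlation mass is at least β(ψ − γ*)²W/(16mΛ). -/
theorem stmt_10 (d n m k : ℕ) (hd : 0 < d) (hn : 0 < n) (hm : 0 < m) (hk : 0 < k)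
    (Λ ε α β : ℝ) (hΛ : 0 < Λ) (hε : 0 < ε)
    (hα : α ∈ Set.Ioc (0 : ℝ) 1) (hβ : β ∈ Set.Ioc (0 : ℝ) 1)
    (x : Fin n → EuclideanSpace ℝ (Fin d)) (hx : ∀ i, x i ≠ 0)
    (a : Fin m → EuclideanSpace ℝ (Fin d)) (ha : ∀ j, ‖a j‖ = 1)
    (y : Fin n → Fin m → ℝ)
    (hysparse : ∀ i, {j | y i j ≠ 0}.ncard ≤ k)
    (hynorm : ∀ i, ∑ j, (y i j) ^ 2 ≤ Λ * ‖x i‖ ^ 2)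
    (T : Fin n → Submodule ℝ (EuclideanSpace ℝ (Fin d)))
    (z : Fin n → EuclideanSpace ℝ (Fin d))
    (hz : ∀ i, z i = x i - ((T i).orthogonalProjectionOnto (x i) : EuclideanSpace ℝ (Fin d)))
    (W : ℝ) (hW : W = ∑ i, ‖x i‖ ^ 2)
    (γs : ℝ) (hγs : γs = (1 / W) * ∑ i, ‖x i - ∑ j, y i j • a j‖ ^ 2)
    (ψ : ℝ) (hψ : ψ = (1 / W) * ∑ i, ‖z i‖ ^ 2)
    (τ : ℝ) (hτ : τ = ε ^ 2 / (16 * k * Λ))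
    (hlarge : ψ ≥ γs + ε)
    (v : EuclideanSpace ℝ (Fin d)) (hv : ‖v‖ = 1)
    (happrox : (∑ i, if α * τ * ‖x i‖ ^ 2 ≤ (inner ℝ (z i) v : ℝ) ^ 2
        then (inner ℝ (z i) v : ℝ) ^ 2 else 0)
      ≥ β * ⨆ u : {u : EuclideanSpace ℝ (Fin d) // ‖u‖ = 1},
          ∑ i, if τ * ‖x i‖ ^ 2 ≤ (inner ℝ (z i) (u : EuclideanSpace ℝ (Fin d)) : ℝ) ^ 2
            then (inner ℝ (z i) (u : EuclideanSpace ℝ (Fin d)) : ℝ) ^ 2 else 0) :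
    (∑ i, if α * τ * ‖x i‖ ^ 2 ≤ (inner ℝ (z i) v : ℝ) ^ 2
        then (inner ℝ (z i) v : ℝ) ^ 2 else 0)
      ≥ (β * (ψ - γs) ^ 2 / (16 * m * Λ)) * W := by
  obtain ⟨hβ0, hβ1⟩ := hβ
  have hn' : Nonempty (Fin n) := ⟨⟨0, hn⟩⟩
  have hm' : Nonempty (Fin m) := ⟨⟨0, hm⟩⟩
  have hk' : (0:ℝ) < k := by exact_mod_cast hk
  have hm'' : (0:ℝ) < m := by exact_mod_cast hm
  have hWpos : 0 < W := by
    rw [hW]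
    exact Finset.sum_pos (fun i _ => pow_pos (norm_pos_iff.mpr (hx i)) 2)
      Finset.univ_nonempty
  set r : Fin n → EuclideanSpace ℝ (Fin d) := fun i => x i - ∑ j, y i j • a j with hr
  set Z : ℝ := ∑ i, ‖z i‖ ^ 2 with hZ
  set G : ℝ := ∑ i, ‖r i‖ ^ 2 with hG
  have hZnn : 0 ≤ Z := Finset.sum_nonneg fun i _ => sq_nonneg _
  have hGnn : 0 ≤ G := Finset.sum_nonneg fun i _ => sq_nonneg _
  have hψZ : ψ * W = Z := by rw [hψ]; field_simp
  have hγG : γs * W = G := by rw [hγs]; field_simp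
  have hZG : ε * W ≤ Z - G := by
    have h1 : Z - G = (ψ - γs) * W := by rw [← hψZ, ← hγG]; ring
    rw [h1]
    exact mul_le_mul_of_nonneg_right (by linarith only [hlarge]) hWpos.le
  have hτpos : 0 < τ := by rw [hτ]; positivity
  -- inner product of z i with x i equals ‖z i‖²
  have hzx : ∀ i, (inner ℝ (z i) (x i) : ℝ) = ‖z i‖ ^ 2 := by
    intro i
    have h1 := Submodule.sub_starProjection_mem_orthogonal (K := T i) (x i)
    have h2 : (inner ℝ (z i)
        (((T i).orthogonalProjectionOnto (x i)) : EuclideanSpace ℝ (Fin d)) : ℝ) = 0 := by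
      rw [real_inner_comm, hz]
      exact h1 _ (Submodule.coe_mem _)
    have h3 : x i = z i + ((T i).orthogonalProjectionOnto (x i) : EuclideanSpace ℝ (Fin d)) := by
      rw [hz]; abel
    rw [h3, inner_add_right, h2, add_zero, real_inner_self_eq_norm_sq]
  set c : Fin n → Fin m → ℝ := fun i j => inner ℝ (z i) (a j) with hc
  have hdecomp : ∀ i, ‖z i‖ ^ 2 = (inner ℝ (z i) (r i) : ℝ) + ∑ j, y i j * c i j := by
    intro i
    have h3 : x i = r i + ∑ j, y i j • a j := by simp [hr]
    rw [← hzx i, h3, inner_add_right, inner_sum]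
    simp only [real_inner_smul_right, hc]
  set S : ℝ := ∑ i, ∑ j, y i j * c i j with hS
  have hS1 : Z - (∑ i, ‖z i‖ * ‖r i‖) ≤ S := by
    have h4 : S = ∑ i, (‖z i‖ ^ 2 - (inner ℝ (z i) (r i) : ℝ)) := by
      rw [hS]
      refine Finset.sum_congr rfl fun i _ => ?_
      rw [hdecomp i]; ring
    rw [h4, hZ, ← Finset.sum_sub_distrib]
    refine Finset.sum_le_sum fun i _ => ?_
    have := real_inner_le_norm (z i) (r i)
    linarith only [this]
  have hCS1 : (∑ i, ‖z i‖ * ‖r i‖) ^ 2 ≤ Z * G :=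
    Finset.sum_mul_sq_le_sq_mul_sq Finset.univ _ _
  have hzr_nn : 0 ≤ ∑ i, ‖z i‖ * ‖r i‖ :=
    Finset.sum_nonneg fun i _ => mul_nonneg (norm_nonneg _) (norm_nonneg _)
  have ht : (∑ i, ‖z i‖ * ‖r i‖) ≤ (Z + G) / 2 := by
    nlinarith only [hCS1, hzr_nn, hZnn, hGnn, sq_nonneg (Z - G)]
  have hSlb : (Z - G) / 2 ≤ S := by linarith only [hS1, ht]
  -- split S into large and small correlation parts
  set L : ℝ := ∑ i, ∑ j, if τ * ‖x i‖ ^ 2 ≤ c i j ^ 2 then y i j * c i j else 0 with hL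
  set g : Fin n → Fin m → ℝ :=
    fun i j => if τ * ‖x i‖ ^ 2 ≤ c i j ^ 2 ∨ y i j = 0 then 0 else c i j with hg
  set Ssm : ℝ := ∑ i, ∑ j, y i j * g i j with hSsm
  have hsplit : S = L + Ssm := by
    rw [hS, hL, hSsm, ← Finset.sum_add_distrib]
    refine Finset.sum_congr rfl fun i _ => ?_
    rw [← Finset.sum_add_distrib]
    refine Finset.sum_congr rfl fun j _ => ?_
    by_cases h1 : τ * ‖x i‖ ^ 2 ≤ c i j ^ 2 <;> by_cases h2 : y i j = 0 <;>
      simp [hg, h1, h2]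
  -- each row of g has small squared mass
  have hg2 : ∀ i, ∑ j, (g i j) ^ 2 ≤ k * (τ * ‖x i‖ ^ 2) := by
    intro i
    have hb : ∀ j, (g i j) ^ 2 ≤ if y i j ≠ 0 then τ * ‖x i‖ ^ 2 else 0 := by
      intro j
      by_cases h2 : y i j = 0
      · simp [hg, h2]
      · by_cases h1 : τ * ‖x i‖ ^ 2 ≤ c i j ^ 2
        · have hgv : g i j = 0 := by simp [hg, h1]
          rw [hgv]
          simp only [ne_eq, h2, not_false_eq_true, if_true]
          simpa using mul_nonneg hτpos.le (sq_nonneg ‖x i‖)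
        · have hgv : g i j = c i j := by simp [hg, h1, h2]
          rw [hgv]
          simp only [ne_eq, h2, not_false_eq_true, if_true]
          linarith only [lt_of_not_ge h1]
    calc ∑ j, (g i j) ^ 2 ≤ ∑ j, if y i j ≠ 0 then τ * ‖x i‖ ^ 2 else 0 :=
          Finset.sum_le_sum fun j _ => hb j
      _ = ∑ j ∈ Finset.filter (fun j => y i j ≠ 0) Finset.univ, τ * ‖x i‖ ^ 2 :=
          (Finset.sum_filter _ _).symm
      _ = (Finset.filter (fun j => y i j ≠ 0) Finset.univ).card * (τ * ‖x i‖ ^ 2) := by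
          rw [Finset.sum_const, nsmul_eq_mul]
      _ ≤ k * (τ * ‖x i‖ ^ 2) := by
          have hcard : (Finset.filter (fun j => y i j ≠ 0) Finset.univ).card ≤ k := by
            have := hysparse i
            rwa [Set.ncard_eq_toFinset_card', Set.toFinset_setOf] at this
          have : ((Finset.filter (fun j => y i j ≠ 0) Finset.univ).card : ℝ) ≤ k := by
            exact_mod_cast hcard
          have hnn : 0 ≤ τ * ‖x i‖ ^ 2 := by positivity
          exact mul_le_mul_of_nonneg_right this hnn
  have hy2 : ∑ i, ∑ j, (y i j) ^ 2 ≤ Λ * W := by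
    rw [hW, Finset.mul_sum]
    exact Finset.sum_le_sum fun i _ => hynorm i
  have hkτ : (k : ℝ) * τ = ε ^ 2 / (16 * Λ) := by
    rw [hτ]; field_simp
  have hgtot : ∑ i, ∑ j, (g i j) ^ 2 ≤ ε ^ 2 * W / (16 * Λ) := by
    calc ∑ i, ∑ j, (g i j) ^ 2 ≤ ∑ i, (k : ℝ) * (τ * ‖x i‖ ^ 2) :=
          Finset.sum_le_sum fun i _ => hg2 i
      _ = (k : ℝ) * τ * ∑ i, ‖x i‖ ^ 2 := by rw [Finset.mul_sum]; ring_nf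
      _ = ε ^ 2 / (16 * Λ) * W := by rw [hkτ, hW]
      _ = ε ^ 2 * W / (16 * Λ) := by ring
  -- Cauchy–Schwarz for the small part
  have hCS2 : Ssm ^ 2 ≤ (∑ i, ∑ j, (y i j) ^ 2) * (∑ i, ∑ j, (g i j) ^ 2) := by
    have h := Finset.sum_mul_sq_le_sq_mul_sq Finset.univ
      (fun p : Fin n × Fin m => y p.1 p.2) (fun p : Fin n × Fin m => g p.1 p.2)
    rw [Fintype.sum_prod_type, Fintype.sum_prod_type, Fintype.sum_prod_type] at h
    exact h
  have hgtot_nn : 0 ≤ ∑ i, ∑ j, (g i j) ^ 2 :=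
    Finset.sum_nonneg fun i _ => Finset.sum_nonneg fun j _ => sq_nonneg _
  have hy2_nn : 0 ≤ ∑ i, ∑ j, (y i j) ^ 2 :=
    Finset.sum_nonneg fun i _ => Finset.sum_nonneg fun j _ => sq_nonneg _
  have hSsm_sq : Ssm ^ 2 ≤ ε ^ 2 * W ^ 2 / 16 := by
    calc Ssm ^ 2 ≤ (∑ i, ∑ j, (y i j) ^ 2) * (∑ i, ∑ j, (g i j) ^ 2) := hCS2
      _ ≤ (Λ * W) * (ε ^ 2 * W / (16 * Λ)) := by
          apply mul_le_mul hy2 hgtot hgtot_nn (by positivity)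
      _ = ε ^ 2 * W ^ 2 / 16 := by field_simp
  have hεW : 0 < ε * W := mul_pos hε hWpos
  have hSsm_le : Ssm ≤ ε * W / 4 := by
    nlinarith only [hSsm_sq, hεW, sq_nonneg (Ssm - ε * W / 4)]
  have hLlb : (Z - G) / 4 ≤ L := by
    have : L = S - Ssm := by rw [hsplit]; ring
    rw [this]
    linarith only [hSlb, hSsm_le, hZG]
  -- upper bound for L via the objective at the best a j
  set Obj : EuclideanSpace ℝ (Fin d) → ℝ :=
    fun u => ∑ i, if τ * ‖x i‖ ^ 2 ≤ (inner ℝ (z i) u : ℝ) ^ 2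
      then (inner ℝ (z i) u : ℝ) ^ 2 else 0 with hObj
  set h : Fin n → Fin m → ℝ :=
    fun i j => if τ * ‖x i‖ ^ 2 ≤ c i j ^ 2 then c i j else 0 with hh
  have hLyh : L = ∑ i, ∑ j, y i j * h i j := by
    rw [hL]
    refine Finset.sum_congr rfl fun i _ => Finset.sum_congr rfl fun j _ => ?_
    by_cases h1 : τ * ‖x i‖ ^ 2 ≤ c i j ^ 2 <;> simp [hh, h1]
  have hh2 : ∑ i, ∑ j, (h i j) ^ 2 = ∑ j, Obj (a j) := by
    rw [Finset.sum_comm]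
    refine Finset.sum_congr rfl fun j _ => ?_
    refine Finset.sum_congr rfl fun i _ => ?_
    by_cases h1 : τ * ‖x i‖ ^ 2 ≤ c i j ^ 2 <;> simp [hh, hObj, hc, h1]
  obtain ⟨j₀, -, hj₀⟩ := Finset.exists_max_image Finset.univ (fun j => Obj (a j))
    Finset.univ_nonempty
  have hObjnn : ∀ u, 0 ≤ Obj u := by
    intro u
    refine Finset.sum_nonneg fun i _ => ?_
    split <;> positivity
  have hsumObj : ∑ j, Obj (a j) ≤ (m : ℝ) * Obj (a j₀) := by
    calc ∑ j, Obj (a j) ≤ ∑ _j : Fin m, Obj (a j₀) :=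
          Finset.sum_le_sum fun j _ => hj₀ j (Finset.mem_univ j)
      _ = (m : ℝ) * Obj (a j₀) := by
          rw [Finset.sum_const, nsmul_eq_mul, Finset.card_univ, Fintype.card_fin]
  have hCS3 : L ^ 2 ≤ (Λ * W) * ((m : ℝ) * Obj (a j₀)) := by
    have hcs := Finset.sum_mul_sq_le_sq_mul_sq Finset.univ
      (fun p : Fin n × Fin m => y p.1 p.2) (fun p : Fin n × Fin m => h p.1 p.2)
    rw [Fintype.sum_prod_type, Fintype.sum_prod_type, Fintype.sum_prod_type] at hcs
    rw [hLyh]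
    calc (∑ i, ∑ j, y i j * h i j) ^ 2
        ≤ (∑ i, ∑ j, (y i j) ^ 2) * (∑ i, ∑ j, (h i j) ^ 2) := hcs
      _ ≤ (Λ * W) * ((m : ℝ) * Obj (a j₀)) := by
          rw [hh2]
          apply mul_le_mul hy2 hsumObj (Finset.sum_nonneg fun j _ => hObjnn _)
            (by positivity)
  -- key inequality
  have hkey : (Z - G) ^ 2 ≤ 16 * Λ * W * ((m : ℝ) * Obj (a j₀)) := by
    have hZGnn : 0 ≤ Z - G := le_trans (le_of_lt (mul_pos hε hWpos)) hZG
    have h7 : ((Z - G) / 4) ^ 2 ≤ L ^ 2 :=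
      pow_le_pow_left₀ (by linarith only [hZGnn]) hLlb 2
    nlinarith only [h7, hCS3]
  -- pass to the supremum
  set F : {u : EuclideanSpace ℝ (Fin d) // ‖u‖ = 1} → ℝ :=
    fun u => ∑ i, if τ * ‖x i‖ ^ 2 ≤ (inner ℝ (z i) (u : EuclideanSpace ℝ (Fin d)) : ℝ) ^ 2
      then (inner ℝ (z i) (u : EuclideanSpace ℝ (Fin d)) : ℝ) ^ 2 else 0 with hF
  have hbdd : BddAbove (Set.range F) := by
    refine ⟨Z, ?_⟩
    rintro _ ⟨u, rfl⟩
    rw [hF, hZ]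
    refine Finset.sum_le_sum fun i _ => ?_
    have h1 : (inner ℝ (z i) (u : EuclideanSpace ℝ (Fin d)) : ℝ) ^ 2 ≤ ‖z i‖ ^ 2 := by
      have h2 := abs_real_inner_le_norm (z i) (u : EuclideanSpace ℝ (Fin d))
      rw [u.2, mul_one] at h2
      calc (inner ℝ (z i) (u : EuclideanSpace ℝ (Fin d)) : ℝ) ^ 2
          = |(inner ℝ (z i) (u : EuclideanSpace ℝ (Fin d)) : ℝ)| ^ 2 := (sq_abs _).symm
        _ ≤ ‖z i‖ ^ 2 := pow_le_pow_left₀ (abs_nonneg _) h2 2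
    split
    · exact h1
    · positivity
  have hsup : Obj (a j₀) ≤ ⨆ u : {u : EuclideanSpace ℝ (Fin d) // ‖u‖ = 1},
      ∑ i, if τ * ‖x i‖ ^ 2 ≤ (inner ℝ (z i) (u : EuclideanSpace ℝ (Fin d)) : ℝ) ^ 2
        then (inner ℝ (z i) (u : EuclideanSpace ℝ (Fin d)) : ℝ) ^ 2 else 0 := by
    have := le_ciSup hbdd ⟨a j₀, ha j₀⟩
    exact this
  have hψγ : (ψ - γs) * W = Z - G := by
    have : ψ * W - γs * W = Z - G := by rw [hψZ, hγG]
    linarith only [this]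
  -- final algebra
  have hfinal : (β * (ψ - γs) ^ 2 / (16 * m * Λ)) * W ≤ β * Obj (a j₀) := by
    rw [div_mul_eq_mul_div, div_le_iff₀ (by positivity)]
    have hexp : β * (ψ - γs) ^ 2 * W * W = β * (Z - G) ^ 2 := by
      rw [← hψγ]; ring
    have h5 : β * (Z - G) ^ 2 ≤ β * (16 * Λ * W * ((m : ℝ) * Obj (a j₀))) :=
      mul_le_mul_of_nonneg_left hkey hβ0.le
    have h6 : β * (ψ - γs) ^ 2 * W * W ≤ (β * Obj (a j₀) * (16 * m * Λ)) * W := by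
      rw [hexp]; nlinarith only [h5]
    exact le_of_mul_le_mul_right h6 hWpos
  calc (β * (ψ - γs) ^ 2 / (16 * m * Λ)) * W ≤ β * Obj (a j₀) := hfinal
    _ ≤ β * ⨆ u : {u : EuclideanSpace ℝ (Fin d) // ‖u‖ = 1},
        ∑ i, if τ * ‖x i‖ ^ 2 ≤ (inner ℝ (z i) (u : EuclideanSpace ℝ (Fin d)) : ℝ) ^ 2
          then (inner ℝ (z i) (u : EuclideanSpace ℝ (Fin d)) : ℝ) ^ 2 else 0 :=
        mul_le_mul_of_nonneg_left hsup hβ0.le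
    _ ≤ _ := happrox
end

section
/- Let τ ∈ (0,1), let v_1,…,v_q (q ≥ 1) be vectors in the unit ball of ℝ^d, and suppose there exists a unit vector x ∈ ℝ^d such that ⟨x, v_i⟩² ≥ τ for all i ∈ {1,…,q}. Let w_1,…,w_q ≥ 0 be weights. Then there exists an index ℓ ∈ {1,…,q} such that Σ_{i : ⟨v_ℓ, v_i⟩² ≥ τ²/4} w_i ⟨v_ℓ, v_i⟩² ≥ (τ²/32) Σ_{i=1}^q w_i ⟨x, v_i⟩². -/
set_option maxHeartbeats 1000000


/-- Clustering lemma: if all the `vᵢ` (in the unit ball) have squared correlation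
at least τ with some unit vector `x`, then one of the `vᵢ` themselves achieves,
with threshold τ²/4, at least τ²/32 of the weighted correlation mass of `x`. -/
theorem stmt_11 (d q : ℕ) (hq : 1 ≤ q) (τ : ℝ) (hτ : τ ∈ Set.Ioo (0 : ℝ) 1)
    (v : Fin q → EuclideanSpace ℝ (Fin d)) (hv : ∀ i, ‖v i‖ ≤ 1)
    (x : EuclideanSpace ℝ (Fin d)) (hx : ‖x‖ = 1)
    (hcorr : ∀ i, τ ≤ (inner ℝ x (v i) : ℝ) ^ 2)
    (w : Fin q → ℝ) (hw : ∀ i, 0 ≤ w i) :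
    ∃ ℓ : Fin q,
      (∑ i, if τ ^ 2 / 4 ≤ (inner ℝ (v ℓ) (v i) : ℝ) ^ 2
          then w i * (inner ℝ (v ℓ) (v i) : ℝ) ^ 2 else 0)
        ≥ (τ ^ 2 / 32) * ∑ i, w i * (inner ℝ x (v i) : ℝ) ^ 2 := by
  obtain ⟨hτ0, hτ1⟩ := hτ
  set a : Fin q → ℝ := fun i => (inner ℝ x (v i) : ℝ) with ha
  set B : Fin q → Fin q → ℝ := fun ℓ i => (inner ℝ (v ℓ) (v i) : ℝ) with hB
  set S : ℝ := ∑ i, w i * a i ^ 2 with hS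
  have hS0 : 0 ≤ S := Finset.sum_nonneg fun i _ => mul_nonneg (hw i) (sq_nonneg _)
  rcases eq_or_lt_of_le hS0 with hSz | hSpos
  · refine ⟨⟨0, hq⟩, ?_⟩
    have : (τ ^ 2 / 32) * S = τ ^ 2 / 32 * ∑ i, w i * a i ^ 2 := rfl
    rw [← hSz]
    have : (0:ℝ) ≤ ∑ i, if τ ^ 2 / 4 ≤ B ⟨0, hq⟩ i ^ 2 then w i * B ⟨0, hq⟩ i ^ 2 else 0 := by
      refine Finset.sum_nonneg fun i _ => ?_
      split_ifs
      · exact mul_nonneg (hw i) (sq_nonneg _)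
      · exact le_refl 0
    simpa using this
  · -- main case
    set g : Fin q → ℝ := fun ℓ => ∑ i, w i * B ℓ i ^ 2 with hg
    set T : ℝ := ∑ ℓ, w ℓ * g ℓ with hT
    -- sum of weights bounds
    have hτw : τ * (∑ i, w i) ≤ S := by
      rw [Finset.mul_sum]
      refine Finset.sum_le_sum fun i _ => ?_
      calc τ * w i = w i * τ := mul_comm _ _
        _ ≤ w i * a i ^ 2 := mul_le_mul_of_nonneg_left (hcorr i) (hw i)
    have ha1 : ∀ i, a i ^ 2 ≤ 1 := by
      intro i
      have h1 : |a i| ≤ ‖x‖ * ‖v i‖ := abs_real_inner_le_norm x (v i)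
      have h2 : ‖x‖ * ‖v i‖ ≤ 1 := by rw [hx, one_mul]; exact hv i
      nlinarith [abs_nonneg (a i), sq_abs (a i)]
    have hSw : S ≤ ∑ i, w i := by
      refine Finset.sum_le_sum fun i _ => ?_
      nlinarith [hw i, ha1 i]
    have hwpos : 0 < ∑ i, w i := lt_of_lt_of_le hSpos hSw
    -- key: T ≥ S^2
    set y : EuclideanSpace ℝ (Fin d) := ∑ i, (w i * a i) • v i with hy
    have hxy : (inner ℝ x y : ℝ) = S := by
      rw [hy, inner_sum]
      refine Finset.sum_congr rfl fun i _ => ?_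
      rw [real_inner_smul_right]; rw [ha]; ring
    have hSy : S ≤ ‖y‖ := by
      have := real_inner_le_norm x y
      rw [hxy, hx, one_mul] at this; exact this
    have hyy : ‖y‖ ^ 2 = ∑ ℓ, ∑ i, (w ℓ * a ℓ) * ((w i * a i) * B ℓ i) := by
      rw [← real_inner_self_eq_norm_sq, hy, sum_inner]
      refine Finset.sum_congr rfl fun ℓ _ => ?_
      rw [real_inner_smul_left, inner_sum]
      rw [Finset.mul_sum]
      refine Finset.sum_congr rfl fun i _ => ?_
      rw [real_inner_smul_right]
    -- Cauchy-Schwarz over pairs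
    have hCS : (‖y‖ ^ 2) ^ 2 ≤ S ^ 2 * T := by
      have h1 : ‖y‖ ^ 2 = ∑ p : Fin q × Fin q,
          (Real.sqrt (w p.1 * w p.2) * (a p.1 * a p.2)) *
          (Real.sqrt (w p.1 * w p.2) * B p.1 p.2) := by
        rw [hyy, ← Finset.sum_product']
        refine Finset.sum_congr rfl fun p _ => ?_
        have hnn : 0 ≤ w p.1 * w p.2 := mul_nonneg (hw p.1) (hw p.2)
        calc w p.1 * a p.1 * (w p.2 * a p.2 * B p.1 p.2)
            = (Real.sqrt (w p.1 * w p.2) * Real.sqrt (w p.1 * w p.2)) *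
              (a p.1 * a p.2 * B p.1 p.2) := by rw [Real.mul_self_sqrt hnn]; ring
          _ = _ := by ring
      have h2 : (∑ p : Fin q × Fin q,
          (Real.sqrt (w p.1 * w p.2) * (a p.1 * a p.2)) ^ 2) = S ^ 2 := by
        rw [sq, hS, Finset.sum_mul_sum, ← Finset.sum_product']
        refine Finset.sum_congr rfl fun p _ => ?_
        have hnn : 0 ≤ w p.1 * w p.2 := mul_nonneg (hw p.1) (hw p.2)
        rw [mul_pow, Real.sq_sqrt hnn]; try ring
      have h3 : (∑ p : Fin q × Fin q,
          (Real.sqrt (w p.1 * w p.2) * B p.1 p.2) ^ 2) = T := by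
        rw [hT]
        have : ∀ ℓ, w ℓ * g ℓ = ∑ i, w ℓ * w i * B ℓ i ^ 2 := by
          intro ℓ; rw [hg, Finset.mul_sum]
          refine Finset.sum_congr rfl fun i _ => ?_; ring
        simp_rw [this]
        rw [← Finset.sum_product']
        refine Finset.sum_congr rfl fun p _ => ?_
        have hnn : 0 ≤ w p.1 * w p.2 := mul_nonneg (hw p.1) (hw p.2)
        rw [mul_pow, Real.sq_sqrt hnn]; try ring
      calc (‖y‖ ^ 2) ^ 2
          = (∑ p : Fin q × Fin q,
              (Real.sqrt (w p.1 * w p.2) * (a p.1 * a p.2)) *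
              (Real.sqrt (w p.1 * w p.2) * B p.1 p.2)) ^ 2 := by rw [h1]
        _ ≤ (∑ p : Fin q × Fin q, (Real.sqrt (w p.1 * w p.2) * (a p.1 * a p.2)) ^ 2) *
            (∑ p : Fin q × Fin q, (Real.sqrt (w p.1 * w p.2) * B p.1 p.2) ^ 2) :=
            Finset.sum_mul_sq_le_sq_mul_sq _ _ _
        _ = S ^ 2 * T := by rw [h2, h3]
    have hTS : S ^ 2 ≤ T := by
      have hy0 : 0 ≤ ‖y‖ := norm_nonneg y
      have hp : (0:ℝ) < S ^ 2 := by positivity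
      have h1 : S ^ 2 ≤ ‖y‖ ^ 2 := by nlinarith
      have h2 : S ^ 2 * S ^ 2 ≤ S ^ 2 * T := by nlinarith
      exact le_of_mul_le_mul_left h2 hp
    clear hCS hSy hxy hyy
    clear_value y
    clear hy y
    -- find a good ℓ
    have hexists : ∃ ℓ, τ * S ≤ g ℓ := by
      by_contra hcon
      push_neg at hcon
      obtain ⟨ℓ₀, hℓ₀⟩ : ∃ ℓ₀, 0 < w ℓ₀ := by
        by_contra hc
        push_neg at hc
        have : ∑ i, w i ≤ 0 := Finset.sum_nonpos fun i _ => hc i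
        linarith
      have hlt : T < (∑ ℓ, w ℓ) * (τ * S) := by
        rw [Finset.sum_mul]
        refine Finset.sum_lt_sum (fun ℓ _ => ?_) ⟨ℓ₀, Finset.mem_univ _, ?_⟩
        · exact mul_le_mul_of_nonneg_left (le_of_lt (hcon ℓ)) (hw ℓ)
        · exact mul_lt_mul_of_pos_left (hcon ℓ₀) hℓ₀
      have : (∑ ℓ, w ℓ) * (τ * S) ≤ S * S := by
        nlinarith [hτw, hSpos]
      nlinarith [hTS]
    obtain ⟨ℓ, hℓ⟩ := hexists
    refine ⟨ℓ, ?_⟩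
    set L : ℝ := ∑ i, if τ ^ 2 / 4 ≤ B ℓ i ^ 2 then w i * B ℓ i ^ 2 else 0 with hL
    have hsplit : g ℓ ≤ L + (τ ^ 2 / 4) * ∑ i, w i := by
      rw [hg, hL, Finset.mul_sum, ← Finset.sum_add_distrib]
      refine Finset.sum_le_sum fun i _ => ?_
      split_ifs with hcnd
      · nlinarith [hw i]
      · push_neg at hcnd
        nlinarith [hw i]
    have h4 : (τ ^ 2 / 4) * ∑ i, w i ≤ (τ / 4) * S := by nlinarith [hτw]
    have hL34 : (3 / 4) * (τ * S) ≤ L := by linarith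
    show L ≥ τ ^ 2 / 32 * S
    nlinarith [mul_pos hτ0 hSpos]
end

section
/- Let p ≥ 2, let n, d ≥ 1, let v_1,…,v_n ∈ ℝ^d satisfy ‖v_i‖ ≤ 1, and let α, β ∈ (0,1]. Define Q = sup over unit vectors y ∈ ℝ^d of (Σ_{i=1}^n |⟨v_i, y⟩|^p)^{1/p}, and assume Q > 0. For τ > 0 define OPT_TC(τ) = sup over unit vectors y of Σ_{i : ⟨v_i,y⟩² ≥ τ} ⟨v_i,y⟩². Then there exists τ ∈ (0,1] such that every unit vector x ∈ ℝ^d satisfying Σ_{i : ⟨v_i,x⟩² ≥ ατ} ⟨v_i,x⟩² ≥ β · OPT_TC(τ) also satisfies Σ_{i=1}^n |⟨v_i,x⟩|^p ≥ α^{(p−2)/2} β Q^p / (2^{p/2+1} (log₂ n + 1)). -/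
set_option maxHeartbeats 1000000

open Finset Real in
private lemma sqRpowHalf (t q : ℝ) : (t^2) ^ (q/2) = |t| ^ q := by
  rw [← sq_abs, ← Real.rpow_natCast |t| 2, ← Real.rpow_mul (abs_nonneg t)]
  congr 1; ring

open Finset Real


/-- Reduction from 2→p norm approximation to the τ-TC problem: there is a threshold
`τ ∈ (0,1]` such that any (α,β)-approximate τ-TC solution `x` has ℓ_p correlation
mass at least `α^{(p−2)/2} β Q^p / (2^{p/2+1}(log₂ n + 1))`. -/
theorem stmt_13 (p : ℝ) (hp : 2 ≤ p) (n d : ℕ) (hn : 1 ≤ n) (hd : 1 ≤ d)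
    (v : Fin n → EuclideanSpace ℝ (Fin d)) (hv : ∀ i, ‖v i‖ ≤ 1)
    (α β : ℝ) (hα : α ∈ Set.Ioc (0 : ℝ) 1) (hβ : β ∈ Set.Ioc (0 : ℝ) 1)
    (Q : ℝ)
    (hQ : Q = ⨆ y : {y : EuclideanSpace ℝ (Fin d) // ‖y‖ = 1},
      (∑ i, |(inner ℝ (v i) (y : EuclideanSpace ℝ (Fin d)) : ℝ)| ^ p) ^ (1 / p))
    (hQpos : 0 < Q) :
    ∃ τ : ℝ, τ ∈ Set.Ioc (0 : ℝ) 1 ∧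
      ∀ x : EuclideanSpace ℝ (Fin d), ‖x‖ = 1 →
        (∑ i, if α * τ ≤ (inner ℝ (v i) x : ℝ) ^ 2 then (inner ℝ (v i) x : ℝ) ^ 2 else 0)
          ≥ β * (⨆ y : {y : EuclideanSpace ℝ (Fin d) // ‖y‖ = 1},
              ∑ i, if τ ≤ (inner ℝ (v i) (y : EuclideanSpace ℝ (Fin d)) : ℝ) ^ 2
                then (inner ℝ (v i) (y : EuclideanSpace ℝ (Fin d)) : ℝ) ^ 2 else 0) →
        ∑ i, |(inner ℝ (v i) x : ℝ)| ^ p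
          ≥ α ^ ((p - 2) / 2) * β * Q ^ p / (2 ^ (p / 2 + 1) * (Real.logb 2 n + 1)) := by
  obtain ⟨hα0, hα1⟩ := hα
  obtain ⟨hβ0, hβ1⟩ := hβ
  have hp0 : (0:ℝ) < p := by linarith
  have hn0 : (0:ℝ) < n := by exact_mod_cast hn
  set f : EuclideanSpace ℝ (Fin d) → ℝ := fun y => ∑ i, |(inner ℝ (v i) y : ℝ)| ^ p with hfdef
  have hfnonneg : ∀ y, 0 ≤ f y := fun y =>
    Finset.sum_nonneg fun i _ => Real.rpow_nonneg (abs_nonneg _) p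
  have hcont : Continuous f := by
    apply continuous_finset_sum
    intro i _
    exact ((continuous_const.inner continuous_id).abs).rpow_const fun y => Or.inr hp0.le
  have hy_exists : (EuclideanSpace.single (⟨0, hd⟩ : Fin d) (1:ℝ)) ∈
      Metric.sphere (0 : EuclideanSpace ℝ (Fin d)) 1 := by
    simp [mem_sphere_zero_iff_norm, EuclideanSpace.norm_single]
  obtain ⟨y₀, hy₀mem, hy₀max⟩ :=
    (isCompact_sphere (0 : EuclideanSpace ℝ (Fin d)) 1).exists_isMaxOn
      ⟨_, hy_exists⟩ hcont.continuousOn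
  rw [mem_sphere_zero_iff_norm] at hy₀mem
  have hy₀max' : ∀ y : EuclideanSpace ℝ (Fin d), ‖y‖ = 1 → f y ≤ f y₀ := fun y hy =>
    hy₀max (by simpa [mem_sphere_zero_iff_norm] using hy)
  have : Nonempty {y : EuclideanSpace ℝ (Fin d) // ‖y‖ = 1} :=
    ⟨⟨y₀, hy₀mem⟩⟩
  -- Q^p equals the maximum sum
  have hQeq : Q = (f y₀) ^ (1/p) := by
    rw [hQ]
    apply le_antisymm
    · exact ciSup_le fun y =>
        Real.rpow_le_rpow (hfnonneg y) (hy₀max' y y.2) (by positivity)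
    · exact le_ciSup ⟨(f y₀)^(1/p), by
        rintro _ ⟨y, rfl⟩
        exact Real.rpow_le_rpow (hfnonneg _) (hy₀max' _ y.2) (by positivity)⟩
        (⟨y₀, hy₀mem⟩ : {y : EuclideanSpace ℝ (Fin d) // ‖y‖ = 1})
  have hQp : Q ^ p = f y₀ := by
    rw [hQeq, one_div, Real.rpow_inv_rpow (hfnonneg y₀) hp0.ne']
  have hQppos : 0 < Q ^ p := Real.rpow_pos_of_pos hQpos p
  -- correlations squared
  set a : Fin n → ℝ := fun i => (inner ℝ (v i) y₀ : ℝ)^2 with hadef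
  have ha0 : ∀ i, 0 ≤ a i := fun i => sq_nonneg _
  have hsq1 : ∀ (y : EuclideanSpace ℝ (Fin d)), ‖y‖ = 1 → ∀ i, (inner ℝ (v i) y : ℝ)^2 ≤ 1 := by
    intro y hy i
    have h1 : |(inner ℝ (v i) y : ℝ)| ≤ 1 := by
      refine le_trans (abs_real_inner_le_norm (v i) y) ?_
      rw [hy, mul_one]; exact hv i
    nlinarith [abs_nonneg (inner ℝ (v i) y : ℝ), sq_abs (inner ℝ (v i) y : ℝ)]
  have ha1 : ∀ i, a i ≤ 1 := fun i => hsq1 y₀ hy₀mem i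
  have hS : Q ^ p = ∑ i, a i ^ (p/2) := by
    rw [hQp, hfdef]
    exact Finset.sum_congr rfl fun i _ => (sqRpowHalf _ p).symm
  have hterm_le : ∀ i, a i ^ (p/2) ≤ Q ^ p := by
    intro i
    rw [hS]
    exact Finset.single_le_sum (fun j _ => Real.rpow_nonneg (ha0 j) _) (mem_univ i)
  set Qs : ℝ := (Q^p)^(2/p) with hQsdef
  have hQspos : 0 < Qs := Real.rpow_pos_of_pos hQppos _
  have hrpinv : (p/2)⁻¹ = 2/p := by rw [inv_div]
  have hQs_pow : Qs ^ (p/2) = Q ^ p := by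
    rw [hQsdef, ← hrpinv, Real.rpow_inv_rpow hQppos.le (by positivity)]
  have ha_le : ∀ i, a i ≤ Qs := by
    intro i
    have h1 : (a i ^ (p/2))^(2/p) ≤ Qs :=
      Real.rpow_le_rpow (Real.rpow_nonneg (ha0 i) _) (hterm_le i) (by positivity)
    rwa [← Real.rpow_mul (ha0 i), show p/2*(2/p) = 1 by field_simp, Real.rpow_one] at h1
  -- cutoff
  set c : ℝ := Qs / (2*n)^((2:ℝ)/p) with hcdef
  have h2n : (0:ℝ) < 2*n := by positivity
  have h2npow : (0:ℝ) < (2*(n:ℝ))^((2:ℝ)/p) := Real.rpow_pos_of_pos h2n _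
  have hcpos : 0 < c := div_pos hQspos h2npow
  have hc_pow : c ^ (p/2) = Q^p / (2*n) := by
    rw [hcdef, Real.div_rpow hQspos.le h2npow.le, hQs_pow, ← hrpinv,
      Real.rpow_inv_rpow h2n.le (by positivity)]
  -- number of buckets
  set L : ℝ := Real.logb 2 n with hLdef
  have hL0 : 0 ≤ L := Real.logb_nonneg one_lt_two (by exact_mod_cast hn)
  have hlog2n : Real.logb 2 (2*n) = 1 + L := by
    rw [Real.logb_mul two_ne_zero hn0.ne', Real.logb_self_eq_one one_lt_two]
  set Y : ℝ := (2/p) * Real.logb 2 (2*n) with hYdef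
  have hY0 : 0 ≤ Y := by
    rw [hYdef, hlog2n]; positivity
  set K : ℕ := ⌊Y⌋₊ + 1 with hKdef
  have hKpos : (0:ℝ) < K := by positivity
  have hKY : Y ≤ K := by
    push_cast [hKdef]
    exact (Nat.lt_floor_add_one Y).le
  have hKle : (K:ℝ) ≤ 2*(L+1) := by
    have h1 : (⌊Y⌋₊:ℝ) ≤ Y := Nat.floor_le hY0
    have h2 : Y ≤ L + 1 := by
      rw [hYdef, hlog2n]
      have h3 : 2/p ≤ 1 := by rw [div_le_one hp0]; linarith
      nlinarith
    push_cast [hKdef]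
    linarith
  -- covering by buckets
  have cover : ∀ i, c ≤ a i → ∃ k, k < K ∧ Qs/2^(k+1) ≤ a i ∧ a i ≤ Qs/2^k := by
    intro i hci
    have hai : 0 < a i := lt_of_lt_of_le hcpos hci
    set x := Real.logb 2 (Qs / a i) with hxdef
    have hqa : 0 < Qs / a i := div_pos hQspos hai
    have hx0 : 0 ≤ x := Real.logb_nonneg one_lt_two
      (by rw [le_div_iff₀ hai, one_mul]; exact ha_le i)
    have h2x : (2:ℝ) ^ x = Qs / a i := Real.rpow_logb two_pos (by norm_num) hqa
    refine ⟨⌊x⌋₊, ?_, ?_, ?_⟩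
    · have hxY : x ≤ Y := by
        have h1 : Qs / a i ≤ (2*n)^((2:ℝ)/p) := by
          rw [div_le_iff₀ hai]
          calc Qs = c * (2*(n:ℝ))^((2:ℝ)/p) := by
                rw [hcdef]; field_simp
          _ ≤ a i * (2*(n:ℝ))^((2:ℝ)/p) := by
                apply mul_le_mul_of_nonneg_right hci h2npow.le
          _ = (2*(n:ℝ))^((2:ℝ)/p) * a i := by ring
        calc x ≤ Real.logb 2 ((2*(n:ℝ))^((2:ℝ)/p)) :=
              Real.logb_le_logb_of_le one_lt_two hqa h1
        _ = Y := by
              rw [Real.logb, Real.log_rpow h2n, hYdef, Real.logb]; ring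
      rw [hKdef]
      exact Nat.lt_succ_of_le (Nat.floor_mono hxY)
    · have h1 : Qs / a i < 2^(⌊x⌋₊+1) := by
        have h2 : x < ((⌊x⌋₊+1 : ℕ):ℝ) := by push_cast; exact Nat.lt_floor_add_one x
        calc Qs / a i = (2:ℝ) ^ x := h2x.symm
        _ < (2:ℝ) ^ (((⌊x⌋₊+1 : ℕ):ℝ)) := Real.rpow_lt_rpow_left_iff one_lt_two |>.mpr h2
        _ = 2^(⌊x⌋₊+1) := Real.rpow_natCast 2 _
      rw [div_le_iff₀ (by positivity : (0:ℝ) < 2^(⌊x⌋₊+1))]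
      rw [div_lt_iff₀ hai, mul_comm] at h1
      exact h1.le
    · have h1 : (2:ℝ)^⌊x⌋₊ ≤ Qs / a i := by
        calc (2:ℝ)^⌊x⌋₊ = (2:ℝ) ^ ((⌊x⌋₊:ℕ):ℝ) := (Real.rpow_natCast 2 _).symm
        _ ≤ (2:ℝ) ^ x := Real.rpow_le_rpow_left_iff one_lt_two |>.mpr (Nat.floor_le hx0)
        _ = Qs / a i := h2x
      rw [le_div_iff₀ hai] at h1
      rw [le_div_iff₀ (by positivity : (0:ℝ) < (2:ℝ)^⌊x⌋₊), mul_comm]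
      exact h1
  -- bucket sums
  set bs : ℕ → ℝ := fun k => ∑ i, if Qs/2^(k+1) ≤ a i ∧ a i ≤ Qs/2^k then a i ^ (p/2) else 0
    with hbsdef
  have hbs0 : ∀ k, 0 ≤ bs k := fun k =>
    Finset.sum_nonneg fun i _ => by positivity
  have hGbs : Q^p/2 ≤ ∑ k ∈ range K, bs k := by
    have hper : ∀ i, a i ^ (p/2) ≤ Q^p/(2*n) +
        ∑ k ∈ range K, (if Qs/2^(k+1) ≤ a i ∧ a i ≤ Qs/2^k then a i ^ (p/2) else 0) := by
      intro i
      by_cases hi : c ≤ a i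
      · obtain ⟨k₀, hk₀K, hk₀l, hk₀u⟩ := cover i hi
        have h1 : a i ^ (p/2) ≤
            ∑ k ∈ range K, (if Qs/2^(k+1) ≤ a i ∧ a i ≤ Qs/2^k then a i ^ (p/2) else 0) := by
          have := Finset.single_le_sum
            (f := fun k => if Qs/2^(k+1) ≤ a i ∧ a i ≤ Qs/2^k then a i ^ (p/2) else 0)
            (fun k _ => by positivity) (Finset.mem_range.mpr hk₀K)
          simpa only [if_pos (And.intro hk₀l hk₀u)] using this
        have h2 : (0:ℝ) ≤ Q^p/(2*n) := by positivity
        linarith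
      · push_neg at hi
        have h1 : a i ^ (p/2) ≤ c ^ (p/2) :=
          Real.rpow_le_rpow (ha0 i) hi.le (by positivity)
        have h2 : (0:ℝ) ≤
            ∑ k ∈ range K, (if Qs/2^(k+1) ≤ a i ∧ a i ≤ Qs/2^k then a i ^ (p/2) else 0) :=
          Finset.sum_nonneg fun k _ => by positivity
        rw [hc_pow] at h1
        linarith
    have hsum : Q^p ≤ (n:ℝ) * (Q^p/(2*n)) + ∑ k ∈ range K, bs k := by
      calc Q^p = ∑ i, a i ^ (p/2) := hS
      _ ≤ ∑ i : Fin n, (Q^p/(2*n) +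
          ∑ k ∈ range K, (if Qs/2^(k+1) ≤ a i ∧ a i ≤ Qs/2^k then a i ^ (p/2) else 0)) :=
            Finset.sum_le_sum fun i _ => hper i
      _ = (n:ℝ) * (Q^p/(2*n)) +
          ∑ i : Fin n, ∑ k ∈ range K, (if Qs/2^(k+1) ≤ a i ∧ a i ≤ Qs/2^k then a i ^ (p/2) else 0) := by
            rw [Finset.sum_add_distrib, Finset.sum_const, Finset.card_univ, Fintype.card_fin,
              nsmul_eq_mul]
      _ = (n:ℝ) * (Q^p/(2*n)) + ∑ k ∈ range K, bs k := by
            rw [Finset.sum_comm]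
    have h3 : (n:ℝ) * (Q^p/(2*n)) = Q^p/2 := by field_simp
    linarith [hsum, h3.symm.le]
  -- pigeonhole: a good bucket
  have hconst : ∑ _k ∈ range K, Q^p/(2*K) = Q^p/2 := by
    rw [Finset.sum_const, Finset.card_range, nsmul_eq_mul]
    field_simp
  obtain ⟨k₀, hk₀mem, hk₀⟩ := Finset.exists_le_of_sum_le (nonempty_range_iff.mpr (by omega))
    (le_trans hconst.le hGbs)
  -- the threshold
  set τ : ℝ := Qs / 2^(k₀+1) with hτdef
  have hτpos : 0 < τ := by positivity
  have h2τ : Qs / 2^k₀ = 2 * τ := by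
    rw [hτdef, pow_succ]
    field_simp
  have hbspos : 0 < bs k₀ := lt_of_lt_of_le (by positivity) hk₀
  have hFne : ∃ i, Qs/2^(k₀+1) ≤ a i ∧ a i ≤ Qs/2^k₀ := by
    by_contra h
    push_neg at h
    have hz : bs k₀ = 0 :=
      Finset.sum_eq_zero fun i _ => if_neg (fun hc => (h i hc.1).not_ge hc.2)
    rw [hz] at hbspos
    exact lt_irrefl 0 hbspos
  obtain ⟨i₀, hi₀l, hi₀u⟩ := hFne
  have hτ1 : τ ≤ 1 := le_trans hi₀l (ha1 i₀)
  refine ⟨τ, ⟨hτpos, hτ1⟩, ?_⟩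
  intro x hx hyp
  set e : ℝ := (p-2)/2 with hedef
  have he0 : 0 ≤ e := by rw [hedef]; linarith
  have hpe : p/2 = e + 1 := by rw [hedef]; ring
  -- thresholded sum at y₀
  set T : ℝ := ∑ i, if τ ≤ a i then a i else 0 with hTdef
  set D : ℝ := (2*τ)^e with hDdef
  have hDpos : 0 < D := Real.rpow_pos_of_pos (by linarith) e
  have hbsT : bs k₀ ≤ D * T := by
    simp only [hbsdef, hTdef, hDdef]
    rw [Finset.mul_sum]
    apply Finset.sum_le_sum
    intro i _
    by_cases h1 : Qs / 2^(k₀+1) ≤ a i ∧ a i ≤ Qs/2^k₀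
    · rw [if_pos h1, if_pos (show τ ≤ a i from h1.1)]
      have hai : 0 < a i := lt_of_lt_of_le hτpos h1.1
      have hsplit : a i ^ (p/2) = a i ^ e * a i := by
        rw [hpe, Real.rpow_add hai, Real.rpow_one]
      rw [hsplit]
      apply mul_le_mul_of_nonneg_right _ hai.le
      exact Real.rpow_le_rpow (ha0 i) (h2τ ▸ h1.2) he0
    · rw [if_neg h1]
      apply mul_nonneg (Real.rpow_nonneg (by linarith) e)
      by_cases h2 : τ ≤ a i <;> simp [h2, ha0 i]
  have hT_ge : Q^p/(2*K*D) ≤ T := by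
    rw [show Q^p/(2*K*D) = (Q^p/(2*K))/D by rw [div_div], div_le_iff₀ hDpos]
    calc Q^p/(2*K) ≤ bs k₀ := hk₀
    _ ≤ D * T := hbsT
    _ = T * D := mul_comm _ _
  -- the supremum is at least the value at y₀
  have hOPT : T ≤ ⨆ y : {y : EuclideanSpace ℝ (Fin d) // ‖y‖ = 1},
      ∑ i, if τ ≤ (inner ℝ (v i) (y : EuclideanSpace ℝ (Fin d)) : ℝ) ^ 2
        then (inner ℝ (v i) (y : EuclideanSpace ℝ (Fin d)) : ℝ) ^ 2 else 0 := by
    refine le_ciSup (f := fun y : {y : EuclideanSpace ℝ (Fin d) // ‖y‖ = 1} =>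
      ∑ i, if τ ≤ (inner ℝ (v i) (y : EuclideanSpace ℝ (Fin d)) : ℝ) ^ 2
        then (inner ℝ (v i) (y : EuclideanSpace ℝ (Fin d)) : ℝ) ^ 2 else 0)
      ⟨(n:ℝ), ?_⟩ (⟨y₀, hy₀mem⟩ : {y : EuclideanSpace ℝ (Fin d) // ‖y‖ = 1})
    rintro _ ⟨y, rfl⟩
    calc ∑ i, (if τ ≤ (inner ℝ (v i) (y : EuclideanSpace ℝ (Fin d)) : ℝ) ^ 2
          then (inner ℝ (v i) (y : EuclideanSpace ℝ (Fin d)) : ℝ) ^ 2 else 0)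
        ≤ ∑ _i : Fin n, (1:ℝ) := by
          apply Finset.sum_le_sum
          intro i _
          split_ifs with h
          · exact hsq1 y.1 y.2 i
          · norm_num
    _ = (n:ℝ) := by simp
  have hXβT : β * T ≤
      ∑ i, if α*τ ≤ (inner ℝ (v i) x : ℝ)^2 then (inner ℝ (v i) x : ℝ)^2 else 0 :=
    le_trans (mul_le_mul_of_nonneg_left hOPT hβ0.le) hyp
  have hmain : ∀ i : Fin n, (α*τ)^e *
      (if α*τ ≤ (inner ℝ (v i) x : ℝ)^2 then (inner ℝ (v i) x : ℝ)^2 else 0) ≤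
      |(inner ℝ (v i) x : ℝ)|^p := by
    intro i
    by_cases h : α*τ ≤ (inner ℝ (v i) x : ℝ)^2
    · rw [if_pos h]
      have h0 : (0:ℝ) < (inner ℝ (v i) x : ℝ)^2 := lt_of_lt_of_le (by positivity) h
      rw [← sqRpowHalf (inner ℝ (v i) x : ℝ) p, hpe, Real.rpow_add h0, Real.rpow_one]
      exact mul_le_mul_of_nonneg_right
        (Real.rpow_le_rpow (by positivity) h he0) (sq_nonneg _)
    · rw [if_neg h, mul_zero]
      positivity
  -- putting everything together
  have hτe : (α*τ)^e = α^e * τ^e := Real.mul_rpow hα0.le hτpos.le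
  have hDe : D = 2^e * τ^e := by
    rw [hDdef]; exact Real.mul_rpow (by norm_num) hτpos.le
  have h2e : (2:ℝ)^(p/2) = 2^e * 2 := by
    rw [hpe, Real.rpow_add two_pos, Real.rpow_one]
  have h2e1 : (2:ℝ)^(p/2+1) = 2^(p/2) * 2 := by
    rw [Real.rpow_add two_pos, Real.rpow_one]
  have hτepos : (0:ℝ) < τ^e := Real.rpow_pos_of_pos hτpos e
  have h2epos : (0:ℝ) < (2:ℝ)^e := Real.rpow_pos_of_pos two_pos e
  have hp2pos : (0:ℝ) < (2:ℝ)^(p/2) := Real.rpow_pos_of_pos two_pos _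
  rw [ge_iff_le]
  calc α^e * β * Q^p / (2^(p/2+1) * (L+1))
      ≤ α^e * β * Q^p / (2^(p/2) * K) := by
        apply div_le_div_of_nonneg_left ?_ (by positivity) ?_
        · positivity
        · rw [h2e1]
          calc (2:ℝ)^(p/2) * K ≤ 2^(p/2) * (2*(L+1)) := by
                apply mul_le_mul_of_nonneg_left hKle hp2pos.le
          _ = 2^(p/2) * 2 * (L+1) := by ring
  _ = (α*τ)^e * (β * (Q^p/(2*K*D))) := by
        rw [hτe, hDe, h2e]
        field_simp
  _ ≤ (α*τ)^e * (β * T) := by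
        apply mul_le_mul_of_nonneg_left _ (by positivity)
        exact mul_le_mul_of_nonneg_left hT_ge hβ0.le
  _ ≤ (α*τ)^e * (∑ i, if α*τ ≤ (inner ℝ (v i) x : ℝ)^2 then (inner ℝ (v i) x : ℝ)^2 else 0) := by
        apply mul_le_mul_of_nonneg_left hXβT (by positivity)
  _ = ∑ i, (α*τ)^e * (if α*τ ≤ (inner ℝ (v i) x : ℝ)^2 then (inner ℝ (v i) x : ℝ)^2 else 0) :=
        Finset.mul_sum _ _ _
  _ ≤ ∑ i, |(inner ℝ (v i) x : ℝ)|^p := Finset.sum_le_sum fun i _ => hmain i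
end

section
/- Let p ≥ 2, let n, d ≥ 1, let v_1,…,v_n ∈ ℝ^d satisfy ‖v_i‖ ≤ 1, let x₀ ∈ ℝ^d be a unit vector, and suppose S := Σ_{i=1}^n |⟨v_i, x₀⟩|^p > 0. Then there exists τ ∈ (0,1] such that sup over unit vectors y ∈ ℝ^d of Σ_{i : ⟨v_i,y⟩² ≥ τ} ⟨v_i,y⟩² ≥ S·τ / (2 (log₂ n + 1) (2τ)^{p/2}). -/
/-- Harmonic sum bound: `∑_{m=1}^n 1/m ≤ 2 log (n+1)`. -/
lemma harmonic_le_two_log (n : ℕ) :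
    ∑ m ∈ Finset.range n, (1 : ℝ) / (m + 1) ≤ 2 * Real.log (n + 1) := by
  induction n with
  | zero => simp
  | succ n ih =>
      rw [Finset.sum_range_succ]
      have h1 : Real.log ((n + 1 : ℝ) / (n + 2)) ≤ (n + 1 : ℝ) / (n + 2) - 1 :=
        Real.log_le_sub_one_of_pos (by positivity)
      have h2 : Real.log ((n + 1 : ℝ) / (n + 2))
          = Real.log (n + 1) - Real.log (n + 2) := by
        rw [Real.log_div (by positivity) (by positivity)]
      have h3 : (n + 1 : ℝ) / (n + 2) - 1 = -(1 / (n + 2)) := by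
        field_simp
        norm_num
      have h4 : (1 : ℝ) / (n + 2) ≤ Real.log (n + 2) - Real.log (n + 1) := by
        rw [h2, h3] at h1; linarith
      have h5 : (1 : ℝ) / ((n : ℝ) + 1) ≤ 2 * (1 / ((n : ℝ) + 2)) := by
        rw [mul_one_div, div_le_div_iff₀ (by positivity) (by positivity)]; nlinarith
      push_cast
      push_cast at ih
      rw [show ((n : ℝ) + 1) + 1 = (n : ℝ) + 2 from by ring]
      linarith

/-- Level-set pigeonhole bound: from a unit vector `x₀` with ℓ_p correlation mass
`S`, some threshold `τ ∈ (0,1]` gives a τ-TC optimum of at least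
`S τ / (2 (log₂ n + 1) (2τ)^{p/2})`. -/
theorem stmt_14 (p : ℝ) (hp : 2 ≤ p) (n d : ℕ) (hn : 1 ≤ n) (hd : 1 ≤ d)
    (v : Fin n → EuclideanSpace ℝ (Fin d)) (hv : ∀ i, ‖v i‖ ≤ 1)
    (x0 : EuclideanSpace ℝ (Fin d)) (hx0 : ‖x0‖ = 1)
    (S : ℝ) (hS : S = ∑ i, |(inner ℝ (v i) x0 : ℝ)| ^ p) (hSpos : 0 < S) :
    ∃ τ : ℝ, τ ∈ Set.Ioc (0 : ℝ) 1 ∧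
      (⨆ y : {y : EuclideanSpace ℝ (Fin d) // ‖y‖ = 1},
        ∑ i, if τ ≤ (inner ℝ (v i) (y : EuclideanSpace ℝ (Fin d)) : ℝ) ^ 2
          then (inner ℝ (v i) (y : EuclideanSpace ℝ (Fin d)) : ℝ) ^ 2 else 0)
        ≥ S * τ / (2 * (Real.logb 2 n + 1) * (2 * τ) ^ (p / 2)) := by
  classical
  have hppos : (0 : ℝ) < p := lt_of_lt_of_le two_pos hp
  set b : Fin n → ℝ := fun i => |(inner ℝ (v i) x0 : ℝ)| ^ p with hbdef
  have habs : ∀ i, |(inner ℝ (v i) x0 : ℝ)| ≤ 1 := by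
    intro i
    calc |(inner ℝ (v i) x0 : ℝ)| ≤ ‖v i‖ * ‖x0‖ := abs_real_inner_le_norm _ _
      _ ≤ 1 := by rw [hx0, mul_one]; exact hv i
  have hb0 : ∀ i, 0 ≤ b i := fun i => Real.rpow_nonneg (abs_nonneg _) p
  set σ : Equiv.Perm (Fin n) := Tuple.sort b with hσ
  set c : Fin n → ℝ := b ∘ σ with hc
  have hmono : Monotone c := Tuple.monotone_sort b
  have hSc : S = ∑ k, c k := by
    rw [hS, ← Equiv.sum_comp σ b]
    rfl
  set L : ℝ := Real.logb 2 n + 1 with hLdef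
  have hlogb0 : 0 ≤ Real.logb 2 n :=
    Real.logb_nonneg one_lt_two (by exact_mod_cast hn)
  have hL1 : 1 ≤ L := by simp only [hLdef]; linarith
  have hLpos : 0 < L := lt_of_lt_of_le one_pos hL1
  -- pigeonhole: some sorted rank carries a lot of mass
  have key : ∃ k : Fin n, S ≤ 4 * L * ((n - k.1 : ℕ) : ℝ) * c k := by
    by_contra hcon
    push_neg at hcon
    have hnk : ∀ k : Fin n, (1 : ℝ) ≤ ((n - k.1 : ℕ) : ℝ) := by
      intro k
      have h : 1 ≤ n - k.1 := by omega
      exact_mod_cast h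
    have hterm : ∀ k : Fin n, c k < S / (4 * L) * (1 / ((n - k.1 : ℕ) : ℝ)) := by
      intro k
      have h0 : (0 : ℝ) < ((n - k.1 : ℕ) : ℝ) := lt_of_lt_of_le one_pos (hnk k)
      have h := hcon k
      have heq : S / (4 * L) * (1 / ((n - k.1 : ℕ) : ℝ))
          = S / (4 * L * ((n - k.1 : ℕ) : ℝ)) := by
        rw [div_mul_div_comm, mul_one]
      rw [heq, lt_div_iff₀ (by positivity)]
      nlinarith [h]
    have hsum : S < ∑ k : Fin n, S / (4 * L) * (1 / ((n - k.1 : ℕ) : ℝ)) := by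
      calc S = ∑ k : Fin n, c k := hSc
        _ < ∑ k : Fin n, S / (4 * L) * (1 / ((n - k.1 : ℕ) : ℝ)) :=
          Finset.sum_lt_sum_of_nonempty
            (Finset.univ_nonempty_iff.mpr (⟨⟨0, hn⟩⟩)) (fun k _ => hterm k)
    have hfac : ∑ k : Fin n, S / (4 * L) * (1 / ((n - k.1 : ℕ) : ℝ))
        = S / (4 * L) * ∑ k : Fin n, (1 / ((n - k.1 : ℕ) : ℝ)) := by
      rw [Finset.mul_sum]
    have hrange : ∑ k : Fin n, (1 / ((n - k.1 : ℕ) : ℝ))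
        = ∑ i ∈ Finset.range n, (1 : ℝ) / ((n - i : ℕ) : ℝ) :=
      Fin.sum_univ_eq_sum_range (fun i => (1 : ℝ) / ((n - i : ℕ) : ℝ)) n
    have hreflect : ∑ i ∈ Finset.range n, (1 : ℝ) / ((n - i : ℕ) : ℝ)
        = ∑ j ∈ Finset.range n, (1 : ℝ) / (j + 1) := by
      rw [← Finset.sum_range_reflect (fun j => (1 : ℝ) / (j + 1)) n]
      apply Finset.sum_congr rfl
      intro i hi
      have hi' := Finset.mem_range.mp hi
      have : ((n - 1 - i : ℕ) : ℝ) + 1 = ((n - i : ℕ) : ℝ) := by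
        have : (n - 1 - i) + 1 = n - i := by omega
        exact_mod_cast congrArg (Nat.cast (R := ℝ)) this
      rw [this]
    have hharm := harmonic_le_two_log n
    have hlog2 : Real.log 2 ≤ 1 := by
      have := Real.log_le_sub_one_of_pos (two_pos (α := ℝ))
      linarith
    have hlogn0 : 0 ≤ Real.log n := Real.log_nonneg (by exact_mod_cast hn)
    have hlogle : Real.log n ≤ Real.logb 2 n := by
      rw [Real.logb, le_div_iff₀ (Real.log_pos one_lt_two)]
      nlinarith
    have hlogn1 : Real.log ((n : ℝ) + 1) ≤ Real.log (2 * n) := by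
      apply Real.log_le_log (by positivity)
      have : (1 : ℝ) ≤ n := by exact_mod_cast hn
      linarith
    have hlog2n : Real.log (2 * (n : ℝ)) = Real.log 2 + Real.log n :=
      Real.log_mul two_ne_zero (by positivity)
    have hfinal : 2 * Real.log ((n : ℝ) + 1) ≤ 4 * L := by
      simp only [hLdef]
      nlinarith
    have : S < S := by
      calc S < ∑ k : Fin n, S / (4 * L) * (1 / ((n - k.1 : ℕ) : ℝ)) := hsum
        _ = S / (4 * L) * ∑ j ∈ Finset.range n, (1 : ℝ) / (j + 1) := by
            rw [hfac, hrange, hreflect]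
        _ ≤ S / (4 * L) * (2 * Real.log ((n : ℝ) + 1)) := by
            apply mul_le_mul_of_nonneg_left hharm (by positivity)
        _ ≤ S / (4 * L) * (4 * L) := by
            apply mul_le_mul_of_nonneg_left hfinal (by positivity)
        _ = S := by field_simp
    exact lt_irrefl S this
  obtain ⟨k, hk⟩ := key
  set t : ℝ := |(inner ℝ (v (σ k)) x0 : ℝ)| with htdef
  have hck : c k = t ^ p := rfl
  have ht0 : 0 < t := by
    rcases lt_or_eq_of_le (abs_nonneg (inner ℝ (v (σ k)) x0 : ℝ)) with h | h
    · exact h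
    · exfalso
      have hteq : t = 0 := htdef.trans h.symm
      have : c k = 0 := by
        rw [hck, hteq, Real.zero_rpow (ne_of_gt hppos)]
      rw [this, mul_zero] at hk
      linarith
  have ht1 : t ≤ 1 := habs (σ k)
  refine ⟨t ^ 2, ⟨by positivity, by nlinarith⟩, ?_⟩
  set τ : ℝ := t ^ 2 with hτdef
  have hτpos : 0 < τ := by positivity
  set nk : ℝ := ((n - k.1 : ℕ) : ℝ) with hnkdef
  have hnk0 : 0 ≤ nk := Nat.cast_nonneg _
  -- the function being supped
  set F : {y : EuclideanSpace ℝ (Fin d) // ‖y‖ = 1} → ℝ := fun y =>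
    ∑ i, if τ ≤ (inner ℝ (v i) (y : EuclideanSpace ℝ (Fin d)) : ℝ) ^ 2
      then (inner ℝ (v i) (y : EuclideanSpace ℝ (Fin d)) : ℝ) ^ 2 else 0 with hFdef
  have hFbdd : BddAbove (Set.range F) := by
    refine ⟨(n : ℝ), ?_⟩
    rintro x ⟨y, rfl⟩
    have hbound : ∀ i, (if τ ≤ (inner ℝ (v i) (y : EuclideanSpace ℝ (Fin d)) : ℝ) ^ 2
        then (inner ℝ (v i) (y : EuclideanSpace ℝ (Fin d)) : ℝ) ^ 2 else 0) ≤ 1 := by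
      intro i
      have h1 : |(inner ℝ (v i) (y : EuclideanSpace ℝ (Fin d)) : ℝ)| ≤ 1 := by
        calc |(inner ℝ (v i) (y : EuclideanSpace ℝ (Fin d)) : ℝ)|
            ≤ ‖v i‖ * ‖(y : EuclideanSpace ℝ (Fin d))‖ := abs_real_inner_le_norm _ _
          _ ≤ 1 := by rw [y.2, mul_one]; exact hv i
      have h2 : (inner ℝ (v i) (y : EuclideanSpace ℝ (Fin d)) : ℝ) ^ 2 ≤ 1 := by
        rw [← sq_abs]; nlinarith [abs_nonneg (inner ℝ (v i) (y : EuclideanSpace ℝ (Fin d)) : ℝ)]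
      split
      · exact h2
      · exact zero_le_one
    calc F y ≤ ∑ _i : Fin n, (1 : ℝ) := Finset.sum_le_sum (fun i _ => hbound i)
      _ = n := by simp
  have hFx0 : nk * τ ≤ F ⟨x0, hx0⟩ := by
    have hmem : ∀ j ∈ Finset.Ici k, τ ≤ (inner ℝ (v (σ j)) x0 : ℝ) ^ 2 := by
      intro j hj
      have hjk : k ≤ j := Finset.mem_Ici.mp hj
      have hcc : t ^ p ≤ |(inner ℝ (v (σ j)) x0 : ℝ)| ^ p := by
        rw [← hck]; exact hmono hjk
      have habsle : t ≤ |(inner ℝ (v (σ j)) x0 : ℝ)| :=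
        (Real.rpow_le_rpow_iff ht0.le (abs_nonneg _) hppos).mp hcc
      calc τ = t ^ 2 := rfl
        _ ≤ |(inner ℝ (v (σ j)) x0 : ℝ)| ^ 2 := by nlinarith
        _ = (inner ℝ (v (σ j)) x0 : ℝ) ^ 2 := sq_abs _
    have hinj : Set.InjOn σ (Finset.Ici k) := fun a _ b _ h => σ.injective h
    have himage : ∑ i ∈ (Finset.Ici k).image σ,
        (if τ ≤ (inner ℝ (v i) x0 : ℝ) ^ 2 then (inner ℝ (v i) x0 : ℝ) ^ 2 else 0)
        = ∑ j ∈ Finset.Ici k,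
          (if τ ≤ (inner ℝ (v (σ j)) x0 : ℝ) ^ 2 then (inner ℝ (v (σ j)) x0 : ℝ) ^ 2 else 0) :=
      Finset.sum_image hinj
    have hlower : ∀ j ∈ Finset.Ici k, τ ≤
        (if τ ≤ (inner ℝ (v (σ j)) x0 : ℝ) ^ 2 then (inner ℝ (v (σ j)) x0 : ℝ) ^ 2 else 0) := by
      intro j hj
      rw [if_pos (hmem j hj)]
      exact hmem j hj
    have hcard : ((Finset.Ici k).card : ℝ) = nk := by
      rw [Fin.card_Ici]
    have hsub : ∑ i ∈ (Finset.Ici k).image σ,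
        (if τ ≤ (inner ℝ (v i) x0 : ℝ) ^ 2 then (inner ℝ (v i) x0 : ℝ) ^ 2 else 0)
        ≤ F ⟨x0, hx0⟩ := by
      apply Finset.sum_le_sum_of_subset_of_nonneg (Finset.subset_univ _)
      intro i _ _
      split
      · positivity
      · exact le_rfl
    calc nk * τ = ((Finset.Ici k).card : ℝ) * τ := by rw [hcard]
      _ = ∑ _j ∈ Finset.Ici k, τ := by rw [Finset.sum_const, nsmul_eq_mul]
      _ ≤ ∑ j ∈ Finset.Ici k,
          (if τ ≤ (inner ℝ (v (σ j)) x0 : ℝ) ^ 2 then (inner ℝ (v (σ j)) x0 : ℝ) ^ 2 else 0) :=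
        Finset.sum_le_sum hlower
      _ = ∑ i ∈ (Finset.Ici k).image σ,
          (if τ ≤ (inner ℝ (v i) x0 : ℝ) ^ 2 then (inner ℝ (v i) x0 : ℝ) ^ 2 else 0) :=
        himage.symm
      _ ≤ F ⟨x0, hx0⟩ := hsub
  have hle : F ⟨x0, hx0⟩ ≤ ⨆ y, F y := le_ciSup hFbdd _
  -- final arithmetic: S*τ/(2L(2τ)^{p/2}) ≤ nk*τ
  have hD : (2 * τ) ^ (p / 2) = 2 ^ (p / 2) * τ ^ (p / 2) :=
    Real.mul_rpow (by norm_num) hτpos.le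
  have hτp : τ ^ (p / 2) = t ^ p := by
    rw [hτdef, ← Real.rpow_natCast t 2, ← Real.rpow_mul ht0.le]
    congr 1
    push_cast
    ring
  have h2p : (2 : ℝ) ≤ 2 ^ (p / 2) := by
    calc (2 : ℝ) = 2 ^ (1 : ℝ) := (Real.rpow_one 2).symm
      _ ≤ 2 ^ (p / 2) := by
        apply Real.rpow_le_rpow_left_iff one_lt_two |>.mpr
        linarith
  have hDpos : 0 < 2 * L * (2 * τ) ^ (p / 2) := by positivity
  have htp0 : 0 < t ^ p := Real.rpow_pos_of_pos ht0 p
  rw [ge_iff_le]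
  refine le_trans ?_ (le_trans hFx0 hle)
  rw [div_le_iff₀ hDpos]
  have hmid : 2 * L * (2 * (t ^ p)) ≤ 2 * L * (2 * τ) ^ (p / 2) := by
    apply mul_le_mul_of_nonneg_left _ (by linarith)
    rw [hD, hτp]
    exact mul_le_mul_of_nonneg_right h2p htp0.le
  calc S * τ ≤ (4 * L * nk * (t ^ p)) * τ := by
        apply mul_le_mul_of_nonneg_right _ hτpos.le
        rw [← hck]; exact hk
    _ = (nk * τ) * (2 * L * (2 * (t ^ p))) := by ring
    _ ≤ (nk * τ) * (2 * L * (2 * τ) ^ (p / 2)) :=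
        mul_le_mul_of_nonneg_left hmid (mul_nonneg hnk0 hτpos.le)
    _ = nk * τ * (2 * L * (2 * τ) ^ (p / 2)) := by ring
end
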